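/- Let (X,f) be a zero-dimensional system, i.e., X is a nonempty compact metrizable totally disconnected space and f : X → X is a homeomorphism. Then there exists a minimal basic set B such that |B ∩ M| = 1 for every minimal set M; moreover, if x_M denotes the unique point of B ∩ M for each minimal set M, then B equals the closure of { x_M : M a minimal set }. -/

import Mathlib

open Set

/-- The full orbit `{fⁿ(x) : n ∈ ℤ}` of a point under a homeomorphism. -/
def orbitZ {X : Type*} [TopologicalSpace X] (f : X ≃ₜ X) (x : X) : Set X :=
  {y | ∃ n : ℤ, (f.toEquiv ^ n) x = y}

/-- `O(A) = ⋃_{n ∈ ℤ} fⁿ(A)`. -/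
def orbitSetZ {X : Type*} [TopologicalSpace X] (f : X ≃ₜ X) (A : Set X) : Set X :=
  ⋃ n : ℤ, (f.toEquiv ^ n) '' A

/-- `O⁺(A) = ⋃_{n ≥ 0} fⁿ(A)`. -/
def orbitSetP {X : Type*} [TopologicalSpace X] (f : X ≃ₜ X) (A : Set X) : Set X :=
  ⋃ n : ℕ, (f.toEquiv ^ (n : ℤ)) '' A

/-- `O⁻(A) = ⋃_{n ≤ 0} fⁿ(A)`. -/
def orbitSetN {X : Type*} [TopologicalSpace X] (f : X ≃ₜ X) (A : Set X) : Set X :=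
  ⋃ n : ℕ, (f.toEquiv ^ (-(n : ℤ))) '' A

/-- The ω-limit set of a point. -/
def omegaSet {X : Type*} [TopologicalSpace X] (f : X ≃ₜ X) (x : X) : Set X :=
  ⋂ n : ℕ, closure {y | ∃ m : ℕ, n ≤ m ∧ (f.toEquiv ^ (m : ℤ)) x = y}

/-- The α-limit set of a point. -/
def alphaSet {X : Type*} [TopologicalSpace X] (f : X ≃ₜ X) (x : X) : Set X :=
  ⋂ n : ℕ, closure {y | ∃ m : ℕ, n ≤ m ∧ (f.toEquiv ^ (-(m : ℤ))) x = y}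

/-- A minimal set: nonempty, closed, invariant, and every orbit in it is dense in it. -/
def IsMinimalSet {X : Type*} [TopologicalSpace X] (f : X ≃ₜ X) (M : Set X) : Prop :=
  M.Nonempty ∧ IsClosed M ∧ f '' M = M ∧ ∀ x ∈ M, M ⊆ closure (orbitZ f x)

/-- `M_f`: the closure of the union of all minimal sets. -/
def minimalUnion {X : Type*} [TopologicalSpace X] (f : X ≃ₜ X) : Set X :=
  closure (⋃₀ {M | IsMinimalSet f M})

/-- A wandering point. -/
def IsWandering {X : Type*} [TopologicalSpace X] (f : X ≃ₜ X) (x : X) : Prop :=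
  ∃ U : Set X, IsOpen U ∧ x ∈ U ∧ ∀ n : ℤ, n ≠ 0 → (f.toEquiv ^ n) '' U ∩ U = ∅

/-- `Ω_f`: the set of non-wandering points. -/
def nonWandering {X : Type*} [TopologicalSpace X] (f : X ≃ₜ X) : Set X :=
  {x | ¬ IsWandering f x}

/-- A quasi-section: a closed set every open neighborhood of which has full orbit. -/
def IsQuasiSection {X : Type*} [TopologicalSpace X] (f : X ≃ₜ X) (A : Set X) : Prop :=
  IsClosed A ∧ ∀ U : Set X, IsOpen U → A ⊆ U → orbitSetZ f U = Set.univ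

/-- A minimal quasi-section (minimal w.r.t. inclusion among quasi-sections). -/
def IsMinimalQuasiSection {X : Type*} [TopologicalSpace X] (f : X ≃ₜ X) (A : Set X) : Prop :=
  IsQuasiSection f A ∧ ∀ B : Set X, IsQuasiSection f B → B ⊆ A → B = A

/-- A basic set: a quasi-section meeting every orbit in at most one point. -/
def IsBasicSet {X : Type*} [TopologicalSpace X] (f : X ≃ₜ X) (A : Set X) : Prop :=
  IsQuasiSection f A ∧ ∀ x : X, (orbitZ f x ∩ A).Subsingleton

/-- A minimal basic set (minimal w.r.t. inclusion among basic sets). -/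
def IsMinimalBasicSet {X : Type*} [TopologicalSpace X] (f : X ≃ₜ X) (A : Set X) : Prop :=
  IsBasicSet f A ∧ ∀ B : Set X, IsBasicSet f B → B ⊆ A → B = A

/-- Densely aperiodic: the points with infinite orbit are dense. -/
def DenselyAperiodic {X : Type*} [TopologicalSpace X] (f : X ≃ₜ X) : Prop :=
  Dense {x : X | (orbitZ f x).Infinite}


namespace Stmt18Aux

-- digit sum injectivity core
lemma digit_lt {a b : ℕ → ℝ} (ha : ∀ n, a n = 0 ∨ a n = (1/3)^n)
    (hb : ∀ n, b n = 0 ∨ b n = (1/3)^n)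
    (N : ℕ) (heq : ∀ m < N, a m = b m) (haN : a N = (1/3)^N) (hbN : b N = 0) :
    ∑' n, b n < ∑' n, a n := by
  have hge : ∀ (c : ℕ → ℝ), (∀ n, c n = 0 ∨ c n = (1/3)^n) → ∀ n, 0 ≤ c n ∧ c n ≤ (1/3)^n := by
    intro c hc n
    rcases hc n with h | h <;> simp [h] <;> positivity
  have hgeo : Summable (fun n : ℕ => ((1:ℝ)/3)^n) :=
    summable_geometric_of_lt_one (by norm_num) (by norm_num)
  have hsa : Summable a := by
    apply Summable.of_nonneg_of_le (fun n => (hge a ha n).1) (fun n => (hge a ha n).2) hgeo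
  have hsb : Summable b := by
    apply Summable.of_nonneg_of_le (fun n => (hge b hb n).1) (fun n => (hge b hb n).2) hgeo
  have key : 0 < ∑' n, (a n - b n) := by
    have hsg : Summable (fun n => a n - b n) := hsa.sub hsb
    have hsplit := Summable.sum_add_tsum_nat_add (f := fun n => a n - b n) (N+1) hsg
    have hsum : ∑ i ∈ Finset.range (N+1), (a i - b i) = (1/3)^N := by
      rw [Finset.sum_eq_single N]
      · rw [haN, hbN]; ring
      · intro m hm hne
        have : m < N := lt_of_le_of_ne (Nat.lt_succ_iff.mp (Finset.mem_range.mp hm)) hne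
        rw [heq m this]; ring
      · intro h; exact absurd (Finset.self_mem_range_succ N) h
    have htail : -((1/3:ℝ)^(N+1) * (3/2)) ≤ ∑' i, (a (i+N+1) - b (i+N+1)) := by
      have h1 : ∀ i, -((1/3:ℝ)^(i+N+1)) ≤ a (i+N+1) - b (i+N+1) := by
        intro i
        have := (hge a ha (i+N+1)).1
        have := (hge b hb (i+N+1)).2
        linarith
      have hsg' : Summable (fun i => a (i+N+1) - b (i+N+1)) := by
        have := (summable_nat_add_iff (f := fun n => a n - b n) (N+1)).mpr hsg
        simpa [add_assoc] using this
      have hsgeo' : Summable (fun i : ℕ => -((1/3:ℝ)^(i+N+1))) := by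
        have := (summable_nat_add_iff (f := fun n : ℕ => ((1:ℝ)/3)^n) (N+1)).mpr hgeo
        simpa [add_assoc] using this.neg
      have h2 := Summable.tsum_le_tsum h1 hsgeo' hsg'
      refine le_trans (le_of_eq ?_) h2
      have : ∑' i : ℕ, ((1:ℝ)/3)^(i+N+1) = (1/3)^(N+1) * (3/2) := by
        have : ∀ i : ℕ, ((1:ℝ)/3)^(i+N+1) = (1/3)^(N+1) * (1/3)^i := by
          intro i; rw [← pow_add]; ring_nf
        rw [tsum_congr this, tsum_mul_left, tsum_geometric_of_lt_one (by norm_num) (by norm_num)]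
        norm_num
      rw [tsum_neg, this]
    have hpos : (0:ℝ) < (1/3)^N := by positivity
    have : ∑' n, (a n - b n) = (1/3)^N + ∑' i, (a (i+N+1) - b (i+N+1)) := by
      rw [← hsplit, hsum]; simp [add_assoc]
    rw [this]
    have : ((1:ℝ)/3)^(N+1) * (3/2) = (1/3)^N * (1/2) := by ring
    rw [this] at htail
    nlinarith
  have := Summable.tsum_sub hsa hsb
  linarith [key, this.symm ▸ key]

lemma exists_cont_inj {X : Type*} [TopologicalSpace X] [CompactSpace X]
    [TopologicalSpace.MetrizableSpace X] [TotallyDisconnectedSpace X] [Nonempty X] :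
    ∃ φ : X → ℝ, Continuous φ ∧ Function.Injective φ := by
  classical
  letI : MetricSpace X := TopologicalSpace.metrizableSpaceMetric X
  -- clopen small neighborhoods
  have hC : ∀ (k : ℕ) (x : X), ∃ V : Set X, IsClopen V ∧ x ∈ V ∧ V ⊆ Metric.ball x (1/(k+1)) := by
    intro k x
    exact compact_exists_isClopen_in_isOpen Metric.isOpen_ball
      (Metric.mem_ball_self (by positivity))
  choose C hCclopen hCmem hCball using hC
  have hcover : ∀ k : ℕ, ∃ t : Finset X, univ ⊆ ⋃ x ∈ t, C k x := by
    intro k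
    exact IsCompact.elim_finite_subcover isCompact_univ (C k) (fun x => (hCclopen k x).2)
      (fun x _ => mem_iUnion.mpr ⟨x, hCmem k x⟩)
  choose t ht using hcover
  set D : Set (Set X) := ⋃ k : ℕ, (C k) '' (t k : Set X) with hD
  have hDcount : D.Countable :=
    countable_iUnion (fun k => ((t k).countable_toSet.image _))
  have hDne : D.Nonempty := by
    obtain ⟨x⟩ := ‹Nonempty X›
    have := ht 0 (mem_univ x)
    rw [mem_iUnion₂] at this
    obtain ⟨z, hz, _⟩ := this
    exact ⟨C 0 z, mem_iUnion.mpr ⟨0, mem_image_of_mem _ hz⟩⟩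
  obtain ⟨u, hu⟩ := hDcount.exists_eq_range hDne
  have huclopen : ∀ n, IsClopen (u n) := by
    intro n
    have : u n ∈ D := hu ▸ mem_range_self n
    rw [hD, mem_iUnion] at this
    obtain ⟨k, z, _, hz⟩ := this
    exact hz ▸ hCclopen k z
  have husep : ∀ x y : X, x ≠ y → ∃ n, x ∈ u n ∧ y ∉ u n := by
    intro x y hxy
    have hd : 0 < dist x y := dist_pos.mpr hxy
    obtain ⟨k, hk⟩ := exists_nat_one_div_lt (half_pos hd)
    have := ht k (mem_univ x)
    rw [mem_iUnion₂] at this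
    obtain ⟨z, hz, hxz⟩ := this
    have hCD : C k z ∈ D := mem_iUnion.mpr ⟨k, mem_image_of_mem _ hz⟩
    rw [hu] at hCD
    obtain ⟨n, hn⟩ := hCD
    refine ⟨n, hn ▸ hxz, ?_⟩
    rw [hn]
    intro hyz
    have h1 : dist x z < 1/(k+1) := Metric.mem_ball.mp (hCball k z hxz)
    have h2 : dist y z < 1/(k+1) := Metric.mem_ball.mp (hCball k z hyz)
    have : dist x y ≤ dist x z + dist y z := dist_triangle_right x y z
    have hk' : (1:ℝ)/(k+1) < dist x y / 2 := by exact_mod_cast hk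
    linarith
  -- define φ
  set φ : X → ℝ := fun x => ∑' n, if x ∈ u n then (1/3:ℝ)^n else 0 with hφ
  refine ⟨φ, ?_, ?_⟩
  · apply continuous_tsum (u := fun n : ℕ => ((1:ℝ)/3)^n)
    · intro n
      have : Continuous ((u n).boolIndicator) :=
        (continuous_boolIndicator_iff_isClopen (u n)).mpr (huclopen n)
      have : Continuous (fun x => if (u n).boolIndicator x = true then (1/3:ℝ)^n else 0) :=
        (continuous_of_discreteTopology (f := fun b : Bool => if b = true then (1/3:ℝ)^n else 0)).comp this
      convert this using 2 with x
      by_cases h : x ∈ u n <;> simp [h, Set.boolIndicator]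
    · exact summable_geometric_of_lt_one (by norm_num) (by norm_num)
    · intro n x
      by_cases h : x ∈ u n <;> simp [h] <;> positivity
  · intro x y hxyeq
    by_contra hxy
    have hex : ∃ n, ¬ (x ∈ u n ↔ y ∈ u n) := by
      obtain ⟨n, hn1, hn2⟩ := husep x y hxy
      exact ⟨n, fun h => hn2 (h.mp hn1)⟩
    set N := Nat.find hex with hN
    have hNspec := Nat.find_spec hex
    have hNmin : ∀ m < N, (x ∈ u m ↔ y ∈ u m) := by
      intro m hm
      by_contra h
      exact absurd (Nat.find_le h) (Nat.not_le.mpr hm)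
    set a : ℕ → ℝ := fun n => if x ∈ u n then (1/3:ℝ)^n else 0 with hadef
    set b : ℕ → ℝ := fun n => if y ∈ u n then (1/3:ℝ)^n else 0 with hbdef
    have hηa : ∀ n, a n = 0 ∨ a n = (1/3)^n := by
      intro n; by_cases h : x ∈ u n <;> simp [hadef, h]
    have hηb : ∀ n, b n = 0 ∨ b n = (1/3)^n := by
      intro n; by_cases h : y ∈ u n <;> simp [hbdef, h]
    have heqm : ∀ m < N, a m = b m := by
      intro m hm
      have := hNmin m hm
      by_cases h : x ∈ u m
      · simp [hadef, hbdef, h, this.mp h]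
      · have h2 : y ∉ u m := fun hy => h (this.mpr hy)
        simp [hadef, hbdef, h, h2]
    have hpa : φ x = ∑' n, a n := rfl
    have hpb : φ y = ∑' n, b n := rfl
    by_cases hxN : x ∈ u N
    · have hyN : y ∉ u N := fun h => hNspec ⟨fun _ => h, fun _ => hxN⟩
      have hlt := digit_lt hηa hηb N heqm (by simp [hadef, hxN]) (by simp [hbdef, hyN])
      rw [← hpa, ← hpb] at hlt
      linarith
    · have hyN : y ∈ u N := by
        by_contra hyN
        exact hNspec ⟨fun h => absurd h hxN, fun h => absurd h hyN⟩
      have hlt := digit_lt hηb hηa N (fun m hm => (heqm m hm).symm) (by simp [hbdef, hyN]) (by simp [hadef, hxN])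
      rw [← hpa, ← hpb] at hlt
      linarith

section dyn
variable {X : Type*} [TopologicalSpace X] (f : X ≃ₜ X)

lemma cont_zpow (n : ℤ) : Continuous ⇑(f.toEquiv ^ n) := by
  induction n using Int.induction_on with
  | zero => simp only [zpow_zero, Equiv.Perm.coe_one]; exact continuous_id
  | succ k ih =>
      rw [zpow_add_one, Equiv.Perm.coe_mul]
      exact ih.comp f.continuous
  | pred k ih =>
      have : (-(k:ℤ) - 1) = -(k:ℤ) + -1 := by ring
      rw [this, zpow_add, Equiv.Perm.coe_mul]
      have h1 : ⇑(f.toEquiv ^ (-1 : ℤ)) = ⇑f.symm := by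
        ext y; simp [zpow_neg, zpow_one]
      rw [h1]
      exact ih.comp f.symm.continuous

lemma img_zpow {M : Set X} (hM : f '' M = M) (n : ℤ) : ⇑(f.toEquiv ^ n) '' M = M := by
  have hsymm : f.symm '' M = M := by
    conv_lhs => rw [← hM]
    ext y; simp [Set.image_image]
  induction n using Int.induction_on with
  | zero => simp
  | succ k ih =>
      rw [zpow_add_one, Equiv.Perm.coe_mul, Set.image_comp]
      have : ⇑f.toEquiv '' M = M := hM
      rw [this, ih]
  | pred k ih =>
      have : (-(k:ℤ) - 1) = -(k:ℤ) + -1 := by ring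
      rw [this, zpow_add, Equiv.Perm.coe_mul, Set.image_comp]
      have h1 : ⇑(f.toEquiv ^ (-1 : ℤ)) = ⇑f.symm := by
        ext y; simp [zpow_neg, zpow_one]
      rw [h1, hsymm, ih]

lemma mem_zpow_of_mem {M : Set X} (hM : f '' M = M) {x : X} (hx : x ∈ M) (n : ℤ) :
    (f.toEquiv ^ n) x ∈ M := by
  rw [← img_zpow f hM n]; exact mem_image_of_mem _ hx

lemma self_mem_orbitZ (x : X) : x ∈ orbitZ f x := ⟨0, by simp⟩

lemma img_orbitZ (x : X) : f '' orbitZ f x = orbitZ f x := by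
  have hstep : ∀ (n : ℤ) (z : X), (f.toEquiv ^ (1+n)) z = f ((f.toEquiv ^ n) z) := by
    intro n z
    rw [zpow_add, zpow_one, Equiv.Perm.mul_apply]
    rfl
  apply Subset.antisymm
  · rintro _ ⟨z, ⟨n, rfl⟩, rfl⟩
    exact ⟨1 + n, hstep n x⟩
  · rintro _ ⟨n, rfl⟩
    refine ⟨(f.toEquiv ^ (n-1)) x, ⟨n - 1, rfl⟩, ?_⟩
    rw [← hstep (n-1) x]
    have hn : 1 + (n - 1) = n := by ring
    rw [hn]

lemma pre_of_img {C : Set X} (h : f '' C = C) : f ⁻¹' C = C := by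
  conv_lhs => rw [← h]
  exact Set.preimage_image_eq _ f.injective

lemma img_closure_orbitZ (x : X) :
    f '' closure (orbitZ f x) = closure (orbitZ f x) := by
  rw [f.image_closure, img_orbitZ]

lemma exists_minimal [CompactSpace X] [T2Space X] (x : X) :
    ∃ M, IsMinimalSet f M ∧ M ⊆ closure (orbitZ f x) := by
  classical
  set S : Set (Set X) := {K | K.Nonempty ∧ IsClosed K ∧ f '' K = K ∧ K ⊆ closure (orbitZ f x)}
    with hS
  have htop : closure (orbitZ f x) ∈ S :=
    ⟨⟨x, subset_closure (self_mem_orbitZ f x)⟩, isClosed_closure,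
      img_closure_orbitZ f x, Subset.rfl⟩
  have hzorn : ∀ c ⊆ S, IsChain (· ⊆ ·) c → c.Nonempty →
      ∃ lb ∈ S, ∀ s ∈ c, lb ⊆ s := by
    intro c hcS hchain hcne
    haveI : Nonempty c := hcne.to_subtype
    refine ⟨⋂₀ c, ?_, fun s hs => sInter_subset_of_mem hs⟩
    have hne : (⋂₀ c).Nonempty := by
      rw [sInter_eq_iInter]
      apply IsCompact.nonempty_iInter_of_directed_nonempty_isCompact_isClosed
      · intro i j
        rcases hchain.total i.2 j.2 with h | h
        · exact ⟨i, Subset.rfl, h⟩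
        · exact ⟨j, h, Subset.rfl⟩
      · exact fun i => (hcS i.2).1
      · exact fun i => ((hcS i.2).2.1).isCompact
      · exact fun i => (hcS i.2).2.1
    refine ⟨hne, isClosed_sInter (fun K hK => (hcS hK).2.1), ?_, ?_⟩
    · have h1 : f '' ⋂₀ c = ⋂₀ c := by
        have h2 : f ⁻¹' ⋂₀ c = ⋂₀ c := by
          rw [Set.preimage_sInter]
          have h3 : ∀ K ∈ c, f ⁻¹' K = K := fun K hK => pre_of_img f (hcS hK).2.2.1
          rw [sInter_eq_biInter]
          exact iInter₂_congr h3
        conv_lhs => rw [← h2]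
        exact Set.image_preimage_eq _ f.surjective
      exact h1
    · obtain ⟨K, hK⟩ := hcne
      exact (sInter_subset_of_mem hK).trans (hcS hK).2.2.2
  obtain ⟨M, -, hmin⟩ := zorn_superset_nonempty S hzorn _ htop
  · obtain ⟨hne, hcl, himg, hsub⟩ := hmin.1
    refine ⟨M, ⟨hne, hcl, himg, ?_⟩, hsub⟩
    intro z hz
    have hKM : closure (orbitZ f z) ⊆ M := by
      apply closure_minimal _ hcl
      rintro _ ⟨n, rfl⟩
      exact mem_zpow_of_mem f himg hz n
    have hKS : closure (orbitZ f z) ∈ S :=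
      ⟨⟨z, subset_closure (self_mem_orbitZ f z)⟩, isClosed_closure,
        img_closure_orbitZ f z, hKM.trans hsub⟩
    exact hmin.2 hKS hKM

end dyn

end Stmt18Aux

open Stmt18Aux in
theorem stmt18 {X : Type*} [TopologicalSpace X] [CompactSpace X] [TopologicalSpace.MetrizableSpace X] [TotallyDisconnectedSpace X] [Nonempty X] (f : X ≃ₜ X) :
    ∃ B : Set X, IsMinimalBasicSet f B ∧
      (∀ M : Set X, IsMinimalSet f M → ∃ p : X, B ∩ M = {p}) ∧
      ∀ c : Set X → X, (∀ M : Set X, IsMinimalSet f M → c M ∈ B ∩ M) →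
        B = closure (c '' {M | IsMinimalSet f M}) := by
  classical
  obtain ⟨φ, hφc, hφi⟩ := exists_cont_inj (X := X)
  set S₀ : Set X := {x | ∃ M, IsMinimalSet f M ∧ x ∈ M ∧ ∀ y ∈ M, φ x ≤ φ y} with hS₀
  set B := closure S₀ with hB
  have key : ∀ z ∈ B, ∀ n : ℤ, φ z ≤ φ ((f.toEquiv ^ n) z) := by
    intro z hz n
    have hcl : IsClosed {w : X | φ w ≤ φ ((f.toEquiv ^ n) w)} :=
      isClosed_le hφc (hφc.comp (cont_zpow f n))
    have hsub : S₀ ⊆ {w : X | φ w ≤ φ ((f.toEquiv ^ n) w)} := by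
      rintro w ⟨M, hM, hwM, hwmin⟩
      exact hwmin _ (mem_zpow_of_mem f hM.2.2.1 hwM n)
    exact closure_minimal hsub hcl hz
  have argmin : ∀ M, IsMinimalSet f M →
      ∃ p, p ∈ M ∧ (∀ y ∈ M, φ p ≤ φ y) ∧ B ∩ M = {p} := by
    intro M hM
    obtain ⟨p, hpM, hp⟩ := (hM.2.1.isCompact).exists_isMinOn hM.1 hφc.continuousOn
    have hpmin : ∀ y ∈ M, φ p ≤ φ y := fun y hy => hp hy
    have hpS₀ : p ∈ S₀ := ⟨M, hM, hpM, hpmin⟩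
    refine ⟨p, hpM, hpmin, ?_⟩
    apply Subset.antisymm
    · rintro z ⟨hzB, hzM⟩
      have h1 : φ z ≤ φ p := by
        have hsub : closure (orbitZ f z) ⊆ {w : X | φ z ≤ φ w} := by
          apply closure_minimal _ (isClosed_le continuous_const hφc)
          rintro _ ⟨n, rfl⟩
          exact key z hzB n
        exact hsub (hM.2.2.2 z hzM hpM)
      exact mem_singleton_iff.mpr (hφi (le_antisymm h1 (hpmin z hzM)))
    · intro z hz
      rw [mem_singleton_iff] at hz
      subst hz
      exact ⟨subset_closure hpS₀, hpM⟩
  have hBqs : IsQuasiSection f B := by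
    refine ⟨isClosed_closure, ?_⟩
    intro U hU hBU
    rw [eq_univ_iff_forall]
    intro x
    obtain ⟨M, hM, hMsub⟩ := exists_minimal f x
    obtain ⟨p, hpM, hpmin, -⟩ := argmin M hM
    have hpB : p ∈ B := subset_closure ⟨M, hM, hpM, hpmin⟩
    obtain ⟨y, hyU, n, rfl⟩ := mem_closure_iff.mp (hMsub hpM) U hU (hBU hpB)
    refine mem_iUnion.mpr ⟨-n, (f.toEquiv ^ n) x, hyU, ?_⟩
    rw [← Equiv.Perm.mul_apply, ← zpow_add]
    simp
  have hqsmeet : ∀ A, IsQuasiSection f A → ∀ M, IsMinimalSet f M → (A ∩ M).Nonempty := by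
    intro A hA M hM
    by_contra h
    rw [not_nonempty_iff_eq_empty] at h
    have hsub : A ⊆ Mᶜ := fun a ha haM => (eq_empty_iff_forall_notMem.mp h a ⟨ha, haM⟩)
    have hall := hA.2 Mᶜ hM.2.1.isOpen_compl hsub
    obtain ⟨x, hxM⟩ := hM.1
    have hx : x ∈ orbitSetZ f Mᶜ := hall ▸ mem_univ x
    obtain ⟨n, hn⟩ := mem_iUnion.mp hx
    obtain ⟨y, hy, hyx⟩ := hn
    have himgM : x ∈ ⇑(f.toEquiv ^ n) '' M := (img_zpow f hM.2.2.1 n).symm ▸ hxM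
    obtain ⟨m, hmM, hmx⟩ := himgM
    exact hy (((f.toEquiv ^ n).injective (hyx.trans hmx.symm)) ▸ hmM)
  have hsing : ∀ x : X, (orbitZ f x ∩ B).Subsingleton := by
    rintro x a ⟨⟨m, hm⟩, haB⟩ b ⟨⟨n, hn⟩, hbB⟩
    subst hm; subst hn
    have h1 : (f.toEquiv ^ (n - m)) ((f.toEquiv ^ m) x) = (f.toEquiv ^ n) x := by
      rw [← Equiv.Perm.mul_apply, ← zpow_add, sub_add_cancel]
    have h2 : (f.toEquiv ^ (m - n)) ((f.toEquiv ^ n) x) = (f.toEquiv ^ m) x := by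
      rw [← Equiv.Perm.mul_apply, ← zpow_add, sub_add_cancel]
    have k1 := key _ haB (n - m); rw [h1] at k1
    have k2 := key _ hbB (m - n); rw [h2] at k2
    exact hφi (le_antisymm k1 k2)
  refine ⟨B, ⟨⟨hBqs, hsing⟩, ?_⟩, ?_, ?_⟩
  · intro B' hB' hB'B
    have hS₀sub : S₀ ⊆ B' := by
      rintro z ⟨M, hM, hzM, hzmin⟩
      obtain ⟨p, hpM, hpmin, htr⟩ := argmin M hM
      have hzB : z ∈ B := subset_closure ⟨M, hM, hzM, hzmin⟩
      have hz : z = p := mem_singleton_iff.mp (htr ▸ (⟨hzB, hzM⟩ : z ∈ B ∩ M))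
      obtain ⟨w, hwB', hwM⟩ := hqsmeet B' hB'.1 M hM
      have hw : w = p := mem_singleton_iff.mp (htr ▸ (⟨hB'B hwB', hwM⟩ : w ∈ B ∩ M))
      rw [hz, ← hw]; exact hwB'
    exact Subset.antisymm hB'B (closure_minimal hS₀sub hB'.1.1)
  · intro M hM
    obtain ⟨p, -, -, htr⟩ := argmin M hM
    exact ⟨p, htr⟩
  · intro c hc
    have himage : c '' {M | IsMinimalSet f M} = S₀ := by
      apply Subset.antisymm
      · rintro _ ⟨M, hM, rfl⟩
        obtain ⟨p, hpM, hpmin, htr⟩ := argmin M hM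
        have hcM : c M = p := mem_singleton_iff.mp (htr ▸ hc M hM)
        rw [hcM]
        exact ⟨M, hM, hpM, hpmin⟩
      · rintro z ⟨M, hM, hzM, hzmin⟩
        obtain ⟨p, hpM, hpmin, htr⟩ := argmin M hM
        have hzB : z ∈ B := subset_closure ⟨M, hM, hzM, hzmin⟩
        have hz : z = p := mem_singleton_iff.mp (htr ▸ (⟨hzB, hzM⟩ : z ∈ B ∩ M))
        have hcM : c M = p := mem_singleton_iff.mp (htr ▸ hc M hM)
        exact ⟨M, hM, by rw [hz, ← hcM]⟩
    rw [himage]
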